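/- Let p, q ∈ L¹([0,π];ℝ), let Ω(x) be the 2×2 matrix with rows (p(x), q(x)) and (q(x), −p(x)), let t ∈ ℝ and μ ∈ ℝ. Let h : [0,π] → ℝ² be absolutely continuous with B h'(x) + Ω(x) h(x) = μ h(x) a.e. and ∫₀^π |h(s)|² ds = 1. Define θ(x) = 1 + (e^t − 1)∫₀^x |h(s)|² ds and Ω_t(x) = Ω(x) + ((e^t − 1)/θ(x))·(B h(x)h(x)* − h(x)h(x)* B). Then u(x) = h(x)/θ(x) is absolutely continuous and satisfies B u'(x) + Ω_t(x) u(x) = μ u(x) a.e. on [0,π]; moreover u(0) = h(0), ∫₀^π |u(x)|² dx = e^{−t}, and if h₁(π) = 0 then u₁(π) = 0. -/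

import Mathlib

open MeasureTheory Real Set

noncomputable section


lemma parts_aux {x : ℝ} (hx : 0 ≤ x) {f g : ℝ → ℝ}
    (hf : IntegrableOn f (Icc 0 x)) (hg : IntegrableOn g (Icc 0 x)) :
    (∫ s in (0:ℝ)..x, f s * ∫ r in (0:ℝ)..s, g r)
      = (∫ s in (0:ℝ)..x, f s) * (∫ r in (0:ℝ)..x, g r)
        - ∫ r in (0:ℝ)..x, (∫ s in (0:ℝ)..r, f s) * g r := by
  have hf' : Integrable f (volume.restrict (Ioc 0 x)) := hf.mono_set Ioc_subset_Icc_self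
  have hg' : Integrable g (volume.restrict (Ioc 0 x)) := hg.mono_set Ioc_subset_Icc_self
  set μ := volume.restrict (Ioc (0:ℝ) x) with hμ
  have hK : Integrable (Function.uncurry fun s r => if r ≤ s then f s * g r else 0) (μ.prod μ) := by
    have hbase : Integrable (fun z : ℝ × ℝ => f z.1 * g z.2) (μ.prod μ) := hf'.mul_prod hg'
    have : (Function.uncurry fun s r => if r ≤ s then f s * g r else 0)
        = ({p : ℝ × ℝ | p.2 ≤ p.1}).indicator (fun z : ℝ × ℝ => f z.1 * g z.2) := by
      funext p
      by_cases hp : p.2 ≤ p.1 <;> simp [Function.uncurry, Set.indicator, hp]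
    rw [this]
    exact hbase.indicator (measurableSet_le measurable_snd measurable_fst)
  have hswap := MeasureTheory.integral_integral_swap hK
  -- left side of hswap equals LHS of goal
  have hL : (∫ s, ∫ r, (if r ≤ s then f s * g r else 0) ∂μ ∂μ)
      = ∫ s in (0:ℝ)..x, f s * ∫ r in (0:ℝ)..s, g r := by
    rw [intervalIntegral.integral_of_le hx, hμ]
    refine setIntegral_congr_ae measurableSet_Ioc ?_
    filter_upwards with s hs
    have h1 : (fun r => if r ≤ s then f s * g r else 0)
        = (Iic s).indicator (fun r => f s * g r) := by
      funext r; by_cases hr : r ≤ s <;> simp [Set.indicator, hr]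
    rw [h1, setIntegral_indicator measurableSet_Iic, Ioc_inter_Iic, min_eq_right hs.2,
      integral_const_mul, intervalIntegral.integral_of_le hs.1.le]
  -- right side of hswap equals the sub-form
  have hR : (∫ r, ∫ s, (if r ≤ s then f s * g r else 0) ∂μ ∂μ)
      = ∫ r in (0:ℝ)..x, ((∫ s in (0:ℝ)..x, f s) - ∫ s in (0:ℝ)..r, f s) * g r := by
    rw [intervalIntegral.integral_of_le hx, hμ]
    refine setIntegral_congr_ae measurableSet_Ioc ?_
    filter_upwards with r hr
    have h1 : (fun s => if r ≤ s then f s * g r else 0)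
        = (Ici r).indicator (fun s => f s * g r) := by
      funext s; by_cases hs : r ≤ s <;> simp [Set.indicator, hs]
    have h2 : Ioc (0:ℝ) x ∩ Ici r = Icc r x := by
      ext s
      simp only [mem_inter_iff, mem_Ioc, mem_Ici, mem_Icc]
      constructor
      · rintro ⟨⟨_, h2⟩, h3⟩; exact ⟨h3, h2⟩
      · rintro ⟨h1', h2⟩; exact ⟨⟨lt_of_lt_of_le hr.1 h1', h2⟩, h1'⟩
    rw [h1, setIntegral_indicator measurableSet_Ici, h2, integral_Icc_eq_integral_Ioc,
      integral_mul_const, ← intervalIntegral.integral_of_le hr.2,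
      intervalIntegral.integral_interval_sub_left
        ((uIcc_of_le hx ▸ hf).intervalIntegrable)
        ((uIcc_of_le hr.1.le ▸ hf.mono_set (Icc_subset_Icc le_rfl hr.2)).intervalIntegrable)]
  rw [hL, hR] at hswap
  rw [hswap]
  have hFcont : ContinuousOn (fun r => ∫ s in (0:ℝ)..r, f s) (Icc 0 x) := by
    have := intervalIntegral.continuousOn_primitive_interval
      (f := f) (μ := volume) (a := (0:ℝ)) (b := x) (by rwa [uIcc_of_le hx])
    rwa [uIcc_of_le hx] at this
  have hint1 : IntegrableOn (fun r => (∫ s in (0:ℝ)..r, f s) * g r) (Icc 0 x) :=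
    IntegrableOn.continuousOn_mul hFcont hg isCompact_Icc
  have hgI : IntervalIntegrable g volume 0 x := (uIcc_of_le hx ▸ hg).intervalIntegrable
  have hPgI : IntervalIntegrable (fun r => (∫ s in (0:ℝ)..r, f s) * g r) volume 0 x :=
    (uIcc_of_le hx ▸ hint1).intervalIntegrable
  have hcg : (fun r => ((∫ s in (0:ℝ)..x, f s) - ∫ s in (0:ℝ)..r, f s) * g r)
      = fun r => (∫ s in (0:ℝ)..x, f s) * g r - (∫ s in (0:ℝ)..r, f s) * g r :=
    funext fun r => by ring
  rw [hcg, intervalIntegral.integral_sub (hgI.const_mul _) hPgI,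
    intervalIntegral.integral_const_mul]


/-- The matrix `B` of the canonical Dirac system. -/
def Bmat : Matrix (Fin 2) (Fin 2) ℝ := !![0, 1; -1, 0]

/-- The canonical potential matrix `Ω(x)` built from `p` and `q`. -/
def Omat (p q : ℝ → ℝ) (x : ℝ) : Matrix (Fin 2) (Fin 2) ℝ := !![p x, q x; q x, -(p x)]

/-- `θ(x) = 1 + (e^t - 1) ∫₀ˣ |h(s)|² ds`. -/
def theta (t : ℝ) (h : ℝ → Fin 2 → ℝ) (x : ℝ) : ℝ :=
  1 + (Real.exp t - 1) * ∫ s in (0:ℝ)..x, ((h s 0) ^ 2 + (h s 1) ^ 2)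

/-- The transformed potential
`Ω_t(x) = Ω(x) + ((e^t - 1)/θ(x)) (B h(x)h(x)* - h(x)h(x)* B)`. -/
def OmatT (p q : ℝ → ℝ) (t : ℝ) (h : ℝ → Fin 2 → ℝ) (x : ℝ) : Matrix (Fin 2) (Fin 2) ℝ :=
  Omat p q x + ((Real.exp t - 1) / theta t h x) •
    (Bmat * Matrix.vecMulVec (h x) (h x) - Matrix.vecMulVec (h x) (h x) * Bmat)

/-- `u(x) = h(x)/θ(x)`. -/
def uFun (t : ℝ) (h : ℝ → Fin 2 → ℝ) (x : ℝ) : Fin 2 → ℝ :=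
  (theta t h x)⁻¹ • h x

/-- The `m`-th eigenfunction part of Theorem 1.2: if `h` is the normalized
eigenfunction for the eigenvalue `μ` of `L(Ω,α)`, then `u = h/θ` is an eigenfunction
of the transformed problem for the same eigenvalue, with squared `L²` norm `e^{-t}`,
and the boundary condition at `π` is preserved. -/
theorem stmt_3 (p q : ℝ → ℝ)
    (hp : IntegrableOn p (Icc (0:ℝ) π)) (hq : IntegrableOn q (Icc (0:ℝ) π))
    (t mu : ℝ)
    (h h' : ℝ → Fin 2 → ℝ)
    -- h is absolutely continuous on [0,π] with integrable derivative h':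
    (hh'int : IntegrableOn h' (Icc (0:ℝ) π))
    (hhAC : ∀ x ∈ Icc (0:ℝ) π, ∀ i : Fin 2, h x i = h 0 i + ∫ s in (0:ℝ)..x, h' s i)
    -- B h' + Ω h = μ h a.e. on [0,π]:
    (hhode : ∀ᵐ x ∂(volume.restrict (Icc (0:ℝ) π)),
      Bmat.mulVec (h' x) + (Omat p q x).mulVec (h x) = mu • h x)
    -- normalization:
    (hhnorm : (∫ s in (0:ℝ)..π, ((h s 0) ^ 2 + (h s 1) ^ 2)) = 1) :
    -- u = h/θ is absolutely continuous and solves B u' + Ω_t u = μ u a.e. on [0,π]: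
    (∃ z : ℝ → Fin 2 → ℝ, IntegrableOn z (Icc (0:ℝ) π) ∧
      (∀ x ∈ Icc (0:ℝ) π, ∀ i : Fin 2,
        uFun t h x i = uFun t h 0 i + ∫ s in (0:ℝ)..x, z s i) ∧
      (∀ᵐ x ∂(volume.restrict (Icc (0:ℝ) π)),
        Bmat.mulVec (z x) + (OmatT p q t h x).mulVec (uFun t h x) = mu • uFun t h x)) ∧
    -- u(0) = h(0):
    uFun t h 0 = h 0 ∧
    -- the squared L² norm of u is e^{-t}:
    (∫ x in (0:ℝ)..π, ((uFun t h x 0) ^ 2 + (uFun t h x 1) ^ 2)) = Real.exp (-t) ∧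
    -- preservation of the boundary condition at π:
    (h π 0 = 0 → uFun t h π 0 = 0) := by
  have hπ : (0:ℝ) ≤ π := pi_pos.le
  set c : ℝ := Real.exp t - 1 with hc
  set nh : ℝ → ℝ := fun s => (h s 0) ^ 2 + (h s 1) ^ 2 with hnh
  set F : ℝ → ℝ := fun x => ∫ s in (0:ℝ)..x, nh s with hF
  have hθeq : ∀ x, theta t h x = 1 + c * F x := fun x => rfl
  -- component integrability of h'
  have h'c : ∀ i : Fin 2, IntegrableOn (fun s => h' s i) (Icc (0:ℝ) π) := by
    intro i
    exact (ContinuousLinearMap.proj (R := ℝ) (φ := fun _ : Fin 2 => ℝ) i).integrable_comp hh'int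
  -- continuity of components of h on Icc
  have hC : ∀ i : Fin 2, ContinuousOn (fun s => h s i) (Icc (0:ℝ) π) := by
    intro i
    have hprim : ContinuousOn (fun x => h 0 i + ∫ s in (0:ℝ)..x, h' s i) (Icc (0:ℝ) π) := by
      refine continuousOn_const.add ?_
      have := intervalIntegral.continuousOn_primitive_interval
        (f := fun s => h' s i) (μ := volume) (a := (0:ℝ)) (b := π)
        (by rw [uIcc_of_le hπ]; exact h'c i)
      rwa [uIcc_of_le hπ] at this
    exact hprim.congr (fun x hx => hhAC x hx i)
  have hnhC : ContinuousOn nh (Icc (0:ℝ) π) := ((hC 0).pow 2).add ((hC 1).pow 2)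
  have hnhInt : IntegrableOn nh (Icc (0:ℝ) π) := hnhC.integrableOn_compact isCompact_Icc
  have hnh0 : ∀ s, 0 ≤ nh s := fun s => by positivity
  have hnhII : ∀ {a b : ℝ}, 0 ≤ a → a ≤ b → b ≤ π → IntervalIntegrable nh volume a b := by
    intro a b ha hab hb
    exact (uIcc_of_le hab ▸ hnhInt.mono_set (Icc_subset_Icc ha hb)).intervalIntegrable
  have hF0 : ∀ x ∈ Icc (0:ℝ) π, 0 ≤ F x := fun x hx =>
    intervalIntegral.integral_nonneg hx.1 (fun s _ => hnh0 s)
  have hF1 : ∀ x ∈ Icc (0:ℝ) π, F x ≤ 1 := by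
    intro x hx
    have hadd := intervalIntegral.integral_add_adjacent_intervals
      (hnhII le_rfl hx.1 hx.2) (hnhII hx.1 hx.2 le_rfl)
    have h2 : 0 ≤ ∫ s in x..π, nh s := intervalIntegral.integral_nonneg hx.2 (fun s _ => hnh0 s)
    have : F x + ∫ s in x..π, nh s = 1 := by rw [hF]; rw [← hhnorm]; exact hadd
    linarith
  have hθpos : ∀ x ∈ Icc (0:ℝ) π, 0 < theta t h x := by
    intro x hx
    rw [hθeq]
    rcases le_or_gt 0 c with h0 | h0
    · nlinarith [hF0 x hx]
    · have : c * F x ≥ c * 1 := by nlinarith [hF1 x hx]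
      have het : 0 < Real.exp t := Real.exp_pos t
      nlinarith
  have hθne : ∀ x ∈ Icc (0:ℝ) π, theta t h x ≠ 0 := fun x hx => (hθpos x hx).ne'
  set G : ℝ → ℝ := fun x => (theta t h x)⁻¹ with hG
  set γ : ℝ → ℝ := fun s => -(c * nh s) / (theta t h s) ^ 2 with hγ
  have hFC : ContinuousOn F (Icc (0:ℝ) π) := by
    have := intervalIntegral.continuousOn_primitive_interval
      (f := nh) (μ := volume) (a := (0:ℝ)) (b := π) (by rw [uIcc_of_le hπ]; exact hnhInt)
    rwa [uIcc_of_le hπ] at this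
  have hθC : ContinuousOn (theta t h) (Icc (0:ℝ) π) := by
    have : ContinuousOn (fun x => 1 + c * F x) (Icc (0:ℝ) π) :=
      continuousOn_const.add (continuousOn_const.mul hFC)
    exact this.congr (fun x _ => hθeq x)
  have hGC : ContinuousOn G (Icc (0:ℝ) π) := hθC.inv₀ hθne
  have hγC : ContinuousOn γ (Icc (0:ℝ) π) := by
    refine ContinuousOn.div (continuousOn_const.mul hnhC).neg (hθC.pow 2) ?_
    intro x hx
    exact pow_ne_zero 2 (hθne x hx)
  -- derivatives on the interior
  have hFd : ∀ s ∈ Ioo (0:ℝ) π, HasDerivAt F (nh s) s := by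
    intro s hs
    have hmem : Icc (0:ℝ) π ∈ nhds s := Icc_mem_nhds hs.1 hs.2
    have hca : ContinuousAt nh s := hnhC.continuousAt hmem
    have hsm : StronglyMeasurableAtFilter nh (nhds s) :=
      ⟨Icc 0 π, hmem, hnhC.aestronglyMeasurable measurableSet_Icc⟩
    have hii : IntervalIntegrable nh volume 0 s := hnhII le_rfl hs.1.le hs.2.le
    exact intervalIntegral.integral_hasDerivAt_right hii hsm hca
  have hθD : ∀ s ∈ Ioo (0:ℝ) π, HasDerivAt (theta t h) (c * nh s) s := by
    intro s hs
    have : HasDerivAt (fun x => 1 + c * F x) (c * nh s) s := (((hFd s hs).const_mul c).const_add 1)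
    exact this.congr_of_eventuallyEq (Filter.Eventually.of_forall (fun x => hθeq x))
  have hGD : ∀ s ∈ Ioo (0:ℝ) π, HasDerivAt G (γ s) s := by
    intro s hs
    have := (hθD s hs).inv (hθne s (Ioo_subset_Icc_self hs))
    exact this
  -- FTC for G
  have hGval : ∀ x ∈ Icc (0:ℝ) π, (∫ s in (0:ℝ)..x, γ s) = G x - 1 := by
    intro x hx
    have h1 : (∫ s in (0:ℝ)..x, γ s) = G x - G 0 := by
      refine intervalIntegral.integral_eq_sub_of_hasDeriv_right_of_le hx.1
        (hGC.mono (Icc_subset_Icc le_rfl hx.2)) ?_ ?_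
      · intro s hs
        exact ((hGD s ⟨hs.1, lt_of_lt_of_le hs.2 hx.2⟩).hasDerivWithinAt)
      · exact (uIcc_of_le hx.1 ▸ (hγC.mono (Icc_subset_Icc le_rfl hx.2)).integrableOn_compact
          isCompact_Icc).intervalIntegrable
    have hG0 : G 0 = 1 := by
      simp [hG, hθeq, hF]
    rw [h1, hG0]
  have hθ0 : theta t h 0 = 1 := by simp [hθeq, hF]
  set z : ℝ → Fin 2 → ℝ := fun s => G s • h' s + γ s • h s with hzdef
  have hhCv : ContinuousOn h (Icc (0:ℝ) π) := continuousOn_pi.2 (fun i => hC i)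
  have hzInt : IntegrableOn z (Icc (0:ℝ) π) := by
    refine Integrable.add ?_ ?_
    · exact hh'int.continuousOn_smul hGC isCompact_Icc
    · exact (hγC.smul hhCv).integrableOn_compact isCompact_Icc
  have hIGh' : ∀ i : Fin 2, IntegrableOn (fun s => G s * h' s i) (Icc (0:ℝ) π) :=
    fun i => IntegrableOn.continuousOn_mul hGC (h'c i) isCompact_Icc
  have hIγh : ∀ i : Fin 2, IntegrableOn (fun s => γ s * h s i) (Icc (0:ℝ) π) :=
    fun i => ((hγC.mul (hC i)).integrableOn_compact isCompact_Icc)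
  have hkey : ∀ x ∈ Icc (0:ℝ) π, ∀ i : Fin 2,
      uFun t h x i = uFun t h 0 i + ∫ s in (0:ℝ)..x, z s i := by
    intro x hx i
    have hsub : Icc (0:ℝ) x ⊆ Icc (0:ℝ) π := Icc_subset_Icc le_rfl hx.2
    have hux : uIcc (0:ℝ) x = Icc 0 x := uIcc_of_le hx.1
    have hγx : IntegrableOn γ (Icc 0 x) := (hγC.mono hsub).integrableOn_compact isCompact_Icc
    have hφx : IntegrableOn (fun s => h' s i) (Icc 0 x) := (h'c i).mono_set hsub
    set A : ℝ → ℝ := fun r => ∫ s in (0:ℝ)..r, h' s i with hA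
    have hACont : ContinuousOn A (Icc (0:ℝ) x) := by
      have := intervalIntegral.continuousOn_primitive_interval
        (f := fun s => h' s i) (μ := volume) (a := (0:ℝ)) (b := x)
        (by rw [hux]; exact hφx)
      rwa [hux] at this
    have II1 : IntervalIntegrable (fun s => G s * h' s i) volume 0 x :=
      (hux ▸ (hIGh' i).mono_set hsub).intervalIntegrable
    have II2 : IntervalIntegrable (fun s => γ s * h s i) volume 0 x :=
      (hux ▸ (hIγh i).mono_set hsub).intervalIntegrable
    have II3 : IntervalIntegrable (fun s => γ s * h 0 i) volume 0 x :=
      (hux ▸ hγx).intervalIntegrable.mul_const _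
    have II4 : IntervalIntegrable (fun s => γ s * A s) volume 0 x :=
      (hux ▸ ((hγC.mono hsub).mul hACont).integrableOn_compact isCompact_Icc).intervalIntegrable
    have IIφ : IntervalIntegrable (fun s => h' s i) volume 0 x := (hux ▸ hφx).intervalIntegrable
    have e1 : (∫ s in (0:ℝ)..x, z s i)
        = (∫ s in (0:ℝ)..x, G s * h' s i) + ∫ s in (0:ℝ)..x, γ s * h s i := by
      rw [← intervalIntegral.integral_add II1 II2]
      refine intervalIntegral.integral_congr (fun s _ => ?_)
      simp [hzdef]
    have e2 : (∫ s in (0:ℝ)..x, γ s * h s i)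
        = (∫ s in (0:ℝ)..x, γ s * h 0 i) + ∫ s in (0:ℝ)..x, γ s * A s := by
      rw [← intervalIntegral.integral_add II3 II4]
      refine intervalIntegral.integral_congr (fun s hs => ?_)
      rw [hux] at hs
      rw [hhAC s (hsub hs) i]
      ring
    have e3 : (∫ s in (0:ℝ)..x, γ s * h 0 i) = (G x - 1) * h 0 i := by
      rw [intervalIntegral.integral_mul_const, hGval x hx]
    have e4 : (∫ s in (0:ℝ)..x, γ s * A s)
        = (G x - 1) * A x - ∫ r in (0:ℝ)..x, (∫ s in (0:ℝ)..r, γ s) * h' r i := by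
      have := parts_aux hx.1 hγx hφx
      rw [this, hGval x hx]
    have e5 : (∫ r in (0:ℝ)..x, (∫ s in (0:ℝ)..r, γ s) * h' r i)
        = (∫ r in (0:ℝ)..x, G r * h' r i) - A x := by
      have e5a : (∫ r in (0:ℝ)..x, (∫ s in (0:ℝ)..r, γ s) * h' r i)
          = ∫ r in (0:ℝ)..x, (G r * h' r i - h' r i) := by
        refine intervalIntegral.integral_congr (fun r hr => ?_)
        rw [hux] at hr
        rw [hGval r (hsub hr)]
        ring
      rw [e5a, intervalIntegral.integral_sub II1 IIφ]
    have hxh : h x i = h 0 i + A x := hhAC x hx i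
    have huf : uFun t h x i = G x * h x i := by simp [uFun, hG, smul_eq_mul]
    have huf0 : uFun t h 0 i = h 0 i := by simp [uFun, hθ0]
    rw [huf, huf0, e1, e2, e3, e4, e5, hxh]
    ring
  -- the transformed ODE holds a.e.
  have hode2 : ∀ᵐ x ∂(volume.restrict (Icc (0:ℝ) π)),
      Bmat.mulVec (z x) + (OmatT p q t h x).mulVec (uFun t h x) = mu • uFun t h x := by
    filter_upwards [hhode, ae_restrict_mem measurableSet_Icc] with x hode hmem
    have hne : theta t h x ≠ 0 := hθne x hmem
    have e0 := congrFun hode 0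
    have e1 := congrFun hode 1
    simp [Bmat, Omat, Matrix.mulVec, dotProduct, Fin.sum_univ_two] at e0 e1
    have E0 : h' x 0 = q x * h x 0 - p x * h x 1 - mu * h x 1 := by linarith
    have E1 : h' x 1 = mu * h x 0 - p x * h x 0 - q x * h x 1 := by linarith
    funext i
    fin_cases i <;>
      simp [hzdef, hG, hγ, hnh, hc, OmatT, Omat, Bmat, uFun, Matrix.mulVec, dotProduct,
        Matrix.vecMulVec, Matrix.mul_apply, Fin.sum_univ_two, Matrix.add_apply,
        Matrix.smul_apply, smul_eq_mul, Matrix.sub_apply, Matrix.vecHead, Matrix.vecTail,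
        E0, E1] <;>
      field_simp <;>
      ring
  -- norm computation
  have hFπ : F π = 1 := hhnorm
  have hF00 : F 0 = 0 := intervalIntegral.integral_same
  have hθπ : theta t h π = Real.exp t := by rw [hθeq, hFπ, hc]; ring
  have hnormval : (∫ x in (0:ℝ)..π, ((uFun t h x 0) ^ 2 + (uFun t h x 1) ^ 2))
      = Real.exp (-t) := by
    have hΨd : ∀ s ∈ Ioo (0:ℝ) π,
        HasDerivWithinAt (fun y => F y * G y) (nh s / theta t h s ^ 2) (Ioi s) s := by
      intro s hs
      have hne : theta t h s ≠ 0 := hθne s (Ioo_subset_Icc_self hs)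
      have hp := (hFd s hs).mul (hGD s hs)
      have heq : nh s * G s + F s * γ s = nh s / theta t h s ^ 2 := by
        have h1 : theta t h s = 1 + c * F s := hθeq s
        have hne' : (1 : ℝ) + c * F s ≠ 0 := by rw [← h1]; exact hne
        simp only [hG, hγ]
        rw [h1]
        field_simp
        ring
      rw [heq] at hp
      exact hp.hasDerivWithinAt
    have hnormInt : IntervalIntegrable (fun s => nh s / theta t h s ^ 2) volume 0 π := by
      refine (uIcc_of_le hπ ▸ ContinuousOn.integrableOn_compact isCompact_Icc ?_).intervalIntegrable
      exact hnhC.div (hθC.pow 2) (fun y hy => pow_ne_zero 2 (hθne y hy))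
    have hval := intervalIntegral.integral_eq_sub_of_hasDeriv_right_of_le hπ
      (hFC.mul hGC) hΨd hnormInt
    have hcongr : (∫ x in (0:ℝ)..π, ((uFun t h x 0) ^ 2 + (uFun t h x 1) ^ 2))
        = ∫ s in (0:ℝ)..π, nh s / theta t h s ^ 2 := by
      refine intervalIntegral.integral_congr (fun y _ => ?_)
      simp only [uFun, Pi.smul_apply, smul_eq_mul, hnh]
      rw [div_eq_mul_inv, ← inv_pow]
      ring
    rw [hcongr, hval, Pi.mul_apply, Pi.mul_apply, hFπ, hF00, hG]
    simp [hθπ, Real.exp_neg]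
  refine ⟨⟨z, hzInt, hkey, hode2⟩, ?_, hnormval, ?_⟩
  · funext i
    simp [uFun, hθ0]
  · intro hb
    simp [uFun, hb]
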